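/- For every f in 𝔉, the function T(f) also belongs to 𝔉; that is, T(f) is continuous, non-increasing, and satisfies H̄(x)² ≤ T(f)(x) ≤ H̄(x) for all real x. -/

import Mathlib

open MeasureTheory Real Set Filter

/-- The Logistic distribution function `H(x) = 1/(1+e^{-x})`. -/
noncomputable def H (x : ℝ) : ℝ := 1 / (1 + Real.exp (-x))

/-- The tail `H̄ := 1 - H` of the Logistic distribution function. -/
noncomputable def Hbar (x : ℝ) : ℝ := 1 - H x

/-- The set 𝔉 of continuous, non-increasing functions `f : ℝ → [0,1]`
with `H̄(x)² ≤ f(x) ≤ H̄(x)` for all `x`. -/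
def memF (f : ℝ → ℝ) : Prop :=
  (∀ x, f x ∈ Set.Icc (0:ℝ) 1) ∧ Continuous f ∧ Antitone f ∧
    ∀ x, Hbar x ^ 2 ≤ f x ∧ f x ≤ Hbar x

/-- The operator `T(f)(x) := H̄(x)² · exp(∫_{-x}^∞ f(s) ds)`. -/
noncomputable def T (f : ℝ → ℝ) (x : ℝ) : ℝ :=
  Hbar x ^ 2 * Real.exp (∫ s in Set.Ioi (-x), f s)

lemma one_add_exp_pos (x : ℝ) : (0:ℝ) < 1 + Real.exp x :=
  lt_add_of_lt_of_nonneg one_pos (Real.exp_pos x).le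

lemma Hbar_eq (x : ℝ) : Hbar x = 1 / (1 + Real.exp x) := by
  have h1 : (0:ℝ) < 1 + Real.exp (-x) := one_add_exp_pos _
  have h2 : (0:ℝ) < 1 + Real.exp x := one_add_exp_pos _
  have he : Real.exp (-x) * Real.exp x = 1 := by
    rw [← Real.exp_add]; simp
  unfold Hbar H
  field_simp
  nlinarith [he]

lemma Hbar_pos (x : ℝ) : 0 < Hbar x := by
  rw [Hbar_eq]; positivity

lemma Hbar_le_one (x : ℝ) : Hbar x ≤ 1 := by
  rw [Hbar_eq]
  rw [div_le_one (one_add_exp_pos x)]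
  nlinarith [Real.exp_pos x]

lemma Hbar_continuous : Continuous Hbar := by
  have : Continuous fun x : ℝ => 1 / (1 + Real.exp x) := by
    apply Continuous.div continuous_const (by continuity)
    intro x; exact (one_add_exp_pos x).ne'
  simpa [funext Hbar_eq] using this

lemma Hbar_le_exp_neg (x : ℝ) : Hbar x ≤ Real.exp (-x) := by
  have h1 : (0:ℝ) < 1 + Real.exp (-x) := one_add_exp_pos _
  unfold Hbar H
  rw [← sub_nonneg]
  have : Real.exp (-x) - (1 - 1 / (1 + Real.exp (-x)))
      = (Real.exp (-x))^2 / (1 + Real.exp (-x)) := by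
    field_simp; ring
  rw [this]; positivity

/-- Antiderivative of `Hbar`. -/
noncomputable def G (s : ℝ) : ℝ := -Real.log (1 + Real.exp (-s))

lemma hasDerivAt_G (s : ℝ) : HasDerivAt G (Hbar s) s := by
  have h1 : HasDerivAt (fun t : ℝ => 1 + Real.exp (-t)) (-Real.exp (-s)) s := by
    have := ((hasDerivAt_neg s).exp).const_add (1:ℝ)
    simpa using this
  have h2 : HasDerivAt (fun t : ℝ => Real.log (1 + Real.exp (-t)))
      (-Real.exp (-s) / (1 + Real.exp (-s))) s :=
    h1.log (one_add_exp_pos (-s)).ne'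
  have h3 := h2.neg
  have h1' : (0:ℝ) < 1 + Real.exp (-s) := one_add_exp_pos _
  have e : Hbar s = -(-Real.exp (-s) / (1 + Real.exp (-s))) := by
    unfold Hbar H
    field_simp
    ring
  rw [e]; exact h3

lemma tendsto_G : Tendsto G atTop (nhds 0) := by
  have h1 : Tendsto (fun s : ℝ => 1 + Real.exp (-s)) atTop (nhds 1) := by
    have : Tendsto (fun s : ℝ => Real.exp (-s)) atTop (nhds 0) :=
      Real.tendsto_exp_atBot.comp tendsto_neg_atTop_atBot
    simpa using this.const_add 1
  have h2 : Tendsto (fun s : ℝ => Real.log (1 + Real.exp (-s))) atTop (nhds 0) := by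
    have := (Real.continuousAt_log (by norm_num : (1:ℝ) ≠ 0)).tendsto.comp h1
    simpa [Function.comp_def] using this
  unfold G; simpa using h2.neg

lemma Hbar_integrableOn (a : ℝ) : IntegrableOn Hbar (Ioi a) := by
  have hexp : IntegrableOn (fun x : ℝ => Real.exp (-1 * x)) (Ioi a) :=
    exp_neg_integrableOn_Ioi a one_pos
  refine MeasureTheory.Integrable.mono hexp (Hbar_continuous.aestronglyMeasurable.restrict) ?_
  filter_upwards with x
  rw [Real.norm_eq_abs, Real.norm_eq_abs, abs_of_pos (Hbar_pos x),
    abs_of_pos (Real.exp_pos _)]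
  simpa using Hbar_le_exp_neg x

lemma integral_Hbar_Ioi (a : ℝ) :
    ∫ s in Ioi a, Hbar s = Real.log (1 + Real.exp (-a)) := by
  have := integral_Ioi_of_hasDerivAt_of_tendsto
    (f := G) (f' := Hbar) (a := a) (m := 0)
    (hasDerivAt_G a).continuousAt.continuousWithinAt
    (fun x _ => hasDerivAt_G x) (Hbar_integrableOn a) tendsto_G
  rw [this]; simp [G]

section
variable {f : ℝ → ℝ} (hf : memF f)

lemma f_integrableOn (hf : memF f) (a : ℝ) : IntegrableOn f (Ioi a) := by
  refine MeasureTheory.Integrable.mono (Hbar_integrableOn a) (hf.2.1.aestronglyMeasurable.restrict) ?_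
  filter_upwards with x
  rw [Real.norm_eq_abs, Real.norm_eq_abs, abs_of_nonneg (hf.1 x).1,
    abs_of_pos (Hbar_pos x)]
  exact (hf.2.2.2 x).2

lemma integral_f_nonneg (hf : memF f) (a : ℝ) : 0 ≤ ∫ s in Ioi a, f s :=
  setIntegral_nonneg measurableSet_Ioi (fun x _ => (hf.1 x).1)

lemma integral_f_le (hf : memF f) (a : ℝ) :
    ∫ s in Ioi a, f s ≤ Real.log (1 + Real.exp (-a)) := by
  rw [← integral_Hbar_Ioi a]
  exact setIntegral_mono_on (f_integrableOn hf a) (Hbar_integrableOn a)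
    measurableSet_Ioi (fun x _ => (hf.2.2.2 x).2)

lemma integral_split (hf : memF f) {a b : ℝ} (hab : a ≤ b) :
    ∫ s in Ioi a, f s = (∫ s in Ioc a b, f s) + ∫ s in Ioi b, f s := by
  rw [← setIntegral_union Ioc_disjoint_Ioi_same measurableSet_Ioi
    ((f_integrableOn hf a).mono_set Ioc_subset_Ioi_self) (f_integrableOn hf b),
    Ioc_union_Ioi_eq_Ioi hab]

lemma integral_Ioc_le (hf : memF f) {a b : ℝ} (hab : a ≤ b) :
    ∫ s in Ioc a b, f s ≤ Real.log (1 + Real.exp (-a)) - Real.log (1 + Real.exp (-b)) := by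
  have hsplit : ∫ s in Ioi a, Hbar s = (∫ s in Ioc a b, Hbar s) + ∫ s in Ioi b, Hbar s := by
    rw [← setIntegral_union Ioc_disjoint_Ioi_same measurableSet_Ioi
      ((Hbar_integrableOn a).mono_set Ioc_subset_Ioi_self) (Hbar_integrableOn b),
      Ioc_union_Ioi_eq_Ioi hab]
  have h1 : ∫ s in Ioc a b, f s ≤ ∫ s in Ioc a b, Hbar s :=
    setIntegral_mono_on ((f_integrableOn hf a).mono_set Ioc_subset_Ioi_self)
      ((Hbar_integrableOn a).mono_set Ioc_subset_Ioi_self)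
      measurableSet_Ioc (fun x _ => (hf.2.2.2 x).2)
  have h2 : ∫ s in Ioc a b, Hbar s
      = Real.log (1 + Real.exp (-a)) - Real.log (1 + Real.exp (-b)) := by
    rw [← integral_Hbar_Ioi a, ← integral_Hbar_Ioi b, hsplit]; ring
  linarith

end

/-- For every `f ∈ 𝔉`, `T(f) ∈ 𝔉`: `T(f)` is continuous,
non-increasing, and `H̄(x)² ≤ T(f)(x) ≤ H̄(x)` for all `x`. -/
theorem stmt2 (f : ℝ → ℝ) (hf : memF f) : memF (T f) := by
  -- basic bounds
  have hub : ∀ x, T f x ≤ Hbar x := by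
    intro x
    have h1 : Real.exp (∫ s in Ioi (-x), f s) ≤ 1 + Real.exp x := by
      calc Real.exp (∫ s in Ioi (-x), f s)
          ≤ Real.exp (Real.log (1 + Real.exp x)) := by
            apply Real.exp_le_exp.2
            simpa using integral_f_le hf (-x)
        _ = 1 + Real.exp x := Real.exp_log (one_add_exp_pos x)
    have h2 : Hbar x ^ 2 * (1 + Real.exp x) = Hbar x := by
      rw [Hbar_eq]
      field_simp
    calc T f x = Hbar x ^ 2 * Real.exp (∫ s in Ioi (-x), f s) := rfl
      _ ≤ Hbar x ^ 2 * (1 + Real.exp x) := by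
          apply mul_le_mul_of_nonneg_left h1 (by positivity)
      _ = Hbar x := h2
  have hlb : ∀ x, Hbar x ^ 2 ≤ T f x := by
    intro x
    have h1 : (1:ℝ) ≤ Real.exp (∫ s in Ioi (-x), f s) :=
      Real.one_le_exp (integral_f_nonneg hf (-x))
    calc Hbar x ^ 2 = Hbar x ^ 2 * 1 := by ring
      _ ≤ T f x := mul_le_mul_of_nonneg_left h1 (by positivity)
  -- continuity
  have hcont : Continuous (T f) := by
    have hii : ∀ a b : ℝ, IntervalIntegrable f volume a b :=
      fun a b => hf.2.1.intervalIntegrable a b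
    have hrep : ∀ a : ℝ, ∫ s in Ioi a, f s = (∫ s in Ioi (0:ℝ), f s) - ∫ s in (0:ℝ)..a, f s := by
      intro a
      rcases le_total a 0 with h | h
      · rw [intervalIntegral.integral_symm, intervalIntegral.integral_of_le h,
          integral_split hf h]
        ring
      · rw [intervalIntegral.integral_of_le h, integral_split hf h]
        ring
    have hc : Continuous fun a : ℝ => ∫ s in Ioi a, f s := by
      have := intervalIntegral.continuous_primitive hii 0
      simpa [funext hrep, Pi.sub_def] using (continuous_const.sub this)
    unfold T
    exact ((Hbar_continuous.pow 2).mul ((hc.comp continuous_neg).rexp))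
  -- antitone
  have hanti : Antitone (T f) := by
    intro x y hxy
    have hnn : (-y : ℝ) ≤ -x := neg_le_neg hxy
    have hsplit := integral_split hf hnn
    have hJ := integral_Ioc_le hf hnn
    set I := ∫ s in Ioi (-x), f s with hI
    set J := ∫ s in Ioc (-y) (-x), f s with hJdef
    have key : Hbar y ^ 2 * Real.exp J ≤ Hbar x ^ 2 := by
      have h1 : Real.exp J ≤ (1 + Real.exp y) / (1 + Real.exp x) := by
        calc Real.exp J ≤ Real.exp (Real.log (1 + Real.exp y) - Real.log (1 + Real.exp x)) := by
              apply Real.exp_le_exp.2; simpa using hJ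
          _ = (1 + Real.exp y) / (1 + Real.exp x) := by
              rw [Real.exp_sub, Real.exp_log (one_add_exp_pos y),
                Real.exp_log (one_add_exp_pos x)]
      calc Hbar y ^ 2 * Real.exp J ≤ Hbar y ^ 2 * ((1 + Real.exp y) / (1 + Real.exp x)) :=
            mul_le_mul_of_nonneg_left h1 (by positivity)
        _ ≤ Hbar x ^ 2 := by
            rw [Hbar_eq, Hbar_eq]
            rw [div_pow, div_pow, div_mul_div_comm, div_le_div_iff₀ (by positivity) (by positivity)]
            have hxy' : Real.exp x ≤ Real.exp y := Real.exp_le_exp.2 hxy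
            have h2 : (0:ℝ) < 1 + Real.exp x := one_add_exp_pos x
            have h3 : (0:ℝ) < 1 + Real.exp y := one_add_exp_pos y
            nlinarith [mul_nonneg (mul_pos h3 h2).le
              (by linarith : (0:ℝ) ≤ Real.exp y - Real.exp x)]
    calc T f y = Hbar y ^ 2 * Real.exp (J + I) := by rw [T, hsplit]
      _ = (Hbar y ^ 2 * Real.exp J) * Real.exp I := by rw [Real.exp_add]; ring
      _ ≤ Hbar x ^ 2 * Real.exp I :=
          mul_le_mul_of_nonneg_right key (Real.exp_pos I).le
      _ = T f x := rfl
  refine ⟨fun x => ⟨?_, ?_⟩, hcont, hanti, fun x => ⟨hlb x, hub x⟩⟩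
  · exact le_trans (by positivity) (hlb x)
  · exact le_trans (hub x) (Hbar_le_one x)
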